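/- Let F ∈ ℂ[z₀, z₁, z₂, z₃] be the homogeneous polynomial of degree 9 given by F = z₂⁹ − 5z₀z₂⁷z₃ + 2z₁z₂⁷z₃ + 4z₂⁸z₃ + 6z₀²z₂⁵z₃² − 5z₀z₁z₂⁵z₃² + z₁²z₂⁵z₃² − 11z₀z₂⁶z₃² + 6z₁z₂⁶z₃² + 6z₂⁷z₃² + z₀³z₂³z₃³ + 9z₀²z₂⁴z₃³ − 11z₀z₁z₂⁴z₃³ + 3z₁²z₂⁴z₃³ − 7z₀z₂⁵z₃³ + 6z₁z₂⁵z₃³ + 2z₂⁶z₃³ + 3z₀²z₂³z₃⁴ − 7z₀z₁z₂³z₃⁴ + 3z₁²z₂³z₃⁴ + 4z₀z₂⁴z₃⁴ − 5z₂⁵z₃⁴ − z₀z₁z₂²z₃⁵ + z₁²z₂²z₃⁵ + 11z₀z₂³z₃⁵ − 6z₁z₂³z₃⁵ − 5z₂⁴z₃⁵ + 7z₀z₂²z₃⁶ − 6z₁z₂²z₃⁶ + 2z₂³z₃⁶ + z₀z₂z₃⁷ − 2z₁z₂z₃⁷ + 6z₂²z₃⁷ + 4z₂z₃⁸ + z₃⁹.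 Then a point p = (p₀, p₁, p₂, p₃) ∈ ℂ⁴ satisfies F(p) = 0 and ∂F/∂z₀(p) = ∂F/∂z₁(p) = ∂F/∂z₂(p) = ∂F/∂z₃(p) = 0 if and only if (p₂ = 0 and p₃ = 0) or (p₀ = 0 and p₂ + p₃ = 0). In other words, the singular locus of the degree-9 surface {F = 0} ⊂ ℙ³(ℂ) is exactly the union of the two lines {z₂ = z₃ = 0} and {z₀ = 0, z₂ + z₃ = 0}. -/

import Mathlib

open MvPolynomial

set_option maxHeartbeats 1000000

/-- The degree-9 homogeneous polynomial `F ∈ ℂ[z₀,z₁,z₂,z₃]` defining the image of the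
tricanonical map, with `X 0 = z₀`, `X 1 = z₁`, `X 2 = z₂`, `X 3 = z₃`. -/
noncomputable def tricanF : MvPolynomial (Fin 4) ℂ :=
  (X 2) ^ 9
  - 5 * (X 0 * (X 2) ^ 7 * X 3) + 2 * (X 1 * (X 2) ^ 7 * X 3) + 4 * ((X 2) ^ 8 * X 3)
  + 6 * ((X 0) ^ 2 * (X 2) ^ 5 * (X 3) ^ 2) - 5 * (X 0 * X 1 * (X 2) ^ 5 * (X 3) ^ 2)
  + (X 1) ^ 2 * (X 2) ^ 5 * (X 3) ^ 2 - 11 * (X 0 * (X 2) ^ 6 * (X 3) ^ 2)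
  + 6 * (X 1 * (X 2) ^ 6 * (X 3) ^ 2) + 6 * ((X 2) ^ 7 * (X 3) ^ 2)
  + (X 0) ^ 3 * (X 2) ^ 3 * (X 3) ^ 3 + 9 * ((X 0) ^ 2 * (X 2) ^ 4 * (X 3) ^ 3)
  - 11 * (X 0 * X 1 * (X 2) ^ 4 * (X 3) ^ 3) + 3 * ((X 1) ^ 2 * (X 2) ^ 4 * (X 3) ^ 3)
  - 7 * (X 0 * (X 2) ^ 5 * (X 3) ^ 3) + 6 * (X 1 * (X 2) ^ 5 * (X 3) ^ 3)
  + 2 * ((X 2) ^ 6 * (X 3) ^ 3)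
  + 3 * ((X 0) ^ 2 * (X 2) ^ 3 * (X 3) ^ 4) - 7 * (X 0 * X 1 * (X 2) ^ 3 * (X 3) ^ 4)
  + 3 * ((X 1) ^ 2 * (X 2) ^ 3 * (X 3) ^ 4) + 4 * (X 0 * (X 2) ^ 4 * (X 3) ^ 4)
  - 5 * ((X 2) ^ 5 * (X 3) ^ 4)
  - X 0 * X 1 * (X 2) ^ 2 * (X 3) ^ 5 + (X 1) ^ 2 * (X 2) ^ 2 * (X 3) ^ 5
  + 11 * (X 0 * (X 2) ^ 3 * (X 3) ^ 5) - 6 * (X 1 * (X 2) ^ 3 * (X 3) ^ 5)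
  - 5 * ((X 2) ^ 4 * (X 3) ^ 5)
  + 7 * (X 0 * (X 2) ^ 2 * (X 3) ^ 6) - 6 * (X 1 * (X 2) ^ 2 * (X 3) ^ 6)
  + 2 * ((X 2) ^ 3 * (X 3) ^ 6)
  + X 0 * X 2 * (X 3) ^ 7 - 2 * (X 1 * X 2 * (X 3) ^ 7) + 6 * ((X 2) ^ 2 * (X 3) ^ 7)
  + 4 * (X 2 * (X 3) ^ 8) + (X 3) ^ 9


lemma pderiv_ofNat' (i : Fin 4) (n : ℕ) [n.AtLeastTwo] :
    pderiv i (no_index (OfNat.ofNat n) : MvPolynomial (Fin 4) ℂ) = 0 := by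
  rw [(map_ofNat (C : ℂ →+* MvPolynomial (Fin 4) ℂ) n).symm, pderiv_C]

/-- A point `p ∈ ℂ⁴` is a singular point of the degree-9 surface `{F = 0}` (i.e. `F` and
all its partial derivatives vanish at `p`) if and only if `p₂ = p₃ = 0` or
`p₀ = 0 ∧ p₂ + p₃ = 0`: the singular locus is the union of the two lines
`{z₂ = z₃ = 0}` and `{z₀ = 0, z₂ + z₃ = 0}`. -/

theorem stmt_8 (p : Fin 4 → ℂ) :
    (eval p tricanF = 0 ∧ ∀ i : Fin 4, eval p (pderiv i tricanF) = 0)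
      ↔ ((p 2 = 0 ∧ p 3 = 0) ∨ (p 0 = 0 ∧ p 2 + p 3 = 0)) := by
  constructor
  · rintro ⟨h0, hD⟩
    have h1 := hD 0; have h2 := hD 1; have h3 := hD 2; have h4 := hD 3
    simp only [tricanF, map_add, map_sub, pderiv_mul, pderiv_pow, pderiv_X_self,
    pderiv_X_of_ne, pderiv_ofNat', pderiv_C, Pi.single_apply, pderiv_X,
    Fin.isValue, reduceIte, Fin.reduceEq, zero_mul, mul_zero, zero_add, add_zero, mul_one,
    one_mul, sub_zero, zero_sub, map_mul, map_pow, eval_X, eval_ofNat, eval_zero,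
    map_natCast, Nat.cast_ofNat, eval_add, eval_sub, eval_mul, eval_pow, map_neg, map_one,
    Nat.reduceSub, pow_one, eval_C] at h0 h1 h2 h3 h4
    have hu : p 2 + p 3 = 0 := by
      have h13 : (p 2 + p 3) ^ 13 = 0 := by
        linear_combination ((22939361/2611593 : ℂ) * p 3 ^ 4 - (83641598/2611593 : ℂ) * p 2 * p 3 ^ 3 + (232714265/2611593 : ℂ) * p 2 ^ 2 * p 3 ^ 2 + (561988270/2611593 : ℂ) * p 2 ^ 3 * p 3 + (140061802/870531 : ℂ) * p 2 ^ 4 - (10163884/2611593 : ℂ) * p 1 * p 3 ^ 3 - (40349981/870531 : ℂ) * p 1 * p 2 * p 3 ^ 2 - (122674249/2611593 : ℂ) * p 1 * p 2 ^ 2 * p 3 - (9 : ℂ) * p 1 * p 2 ^ 3 + (5081942/2611593 : ℂ) * p 0 * p 3 ^ 3 + (28782652219/987182154 : ℂ) * p 0 * p 2 * p 3 ^ 2 + (107075176879/987182154 : ℂ) * p 0 * p 2 ^ 2 * p 3 + (19502694997/987182154 : ℂ) * p 0 * p 2 ^ 3 + (1152689131/658121436 : ℂ) * p 0 * p 1 *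 p 2 * p 3 - (4975/399588 : ℂ) * p 0 * p 1 * p 2 ^ 2 - (6746681981/658121436 : ℂ) * p 0 ^ 2 * p 2 * p 3) * h0 + ((1822541138/634617099 : ℂ) * p 3 ^ 5 + (5658429320/634617099 : ℂ) * p 2 * p 3 ^ 4 + (712141198/70513011 : ℂ) * p 2 ^ 2 * p 3 ^ 3 - (53147612/23504337 : ℂ) * p 2 ^ 3 * p 3 ^ 2 - (8576771804/634617099 : ℂ) * p 2 ^ 4 * p 3 - (4568403680/634617099 : ℂ) * p 2 ^ 5 + (982936219/8884639386 : ℂ) * p 1 * p 3 ^ 4 - (15664714964/4442319693 : ℂ) * p 1 * p 2 * p 3 ^ 3 - (36197896754/4442319693 : ℂ) * p 1 * p 2 ^ 2 * p 3 ^ 2 - (23435776178/4442319693 : ℂ) * p 1 * p 2 ^ 3 * p 3 - (6788124995/8884639386 : ℂ) * p 1 * p 2 ^ 4 - (535830653/987182154 : ℂ) * p 1 ^ 2 * p 3 ^ 3 - (1068930031/987182154 : ℂ) * p 1 ^ 2 * p 2 * p 3 ^ 2 - (530368103/987182154 : ℂ) * p 1 ^ 2 * p 2 ^ 2 * p 3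 + (4975/1798146 : ℂ) * p 1 ^ 2 * p 2 ^ 3 - (16227640052/634617099 : ℂ) * p 0 * p 3 ^ 4 - (95125476610/4442319693 : ℂ) * p 0 * p 2 * p 3 ^ 3 - (66141678535/2961546462 : ℂ) * p 0 * p 2 ^ 2 * p 3 ^ 2 - (152023883069/4442319693 : ℂ) * p 0 * p 2 ^ 3 * p 3 - (292643059265/8884639386 : ℂ) * p 0 * p 2 ^ 4 - (6006181613/1974364308 : ℂ) * p 0 * p 1 * p 3 ^ 3 + (21458058109/2538468396 : ℂ) * p 0 * p 1 * p 2 * p 3 ^ 2 + (212810492353/17769278772 : ℂ) * p 0 * p 1 * p 2 ^ 2 * p 3 + (7108009/3596292 : ℂ) * p 0 * p 1 * p 2 ^ 3 + (24077953175/17769278772 : ℂ) * p 0 ^ 2 * p 3 ^ 3 + (24235232933/8884639386 : ℂ) * p 0 ^ 2 * p 2 * p 3 ^ 2 - (424070861843/17769278772 : ℂ) * p 0 ^ 2 * p 2 ^ 2 * p 3 - (320649031/72824913 : ℂ) * p 0 ^ 2 * p 2 ^ 3 + (535830653/1974364308 : ℂ) * p 0 ^ 2 * p 1 * p 3 ^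 2 - (619589753/1974364308 : ℂ) * p 0 ^ 2 * p 1 * p 2 * p 3 + (4975/1798146 : ℂ) * p 0 ^ 2 * p 1 * p 2 ^ 2 - (2852134015/1974364308 : ℂ) * p 0 ^ 3 * p 3 ^ 2 + (6835186705/2961546462 : ℂ) * p 0 ^ 3 * p 2 * p 3) * h1 + ((30763345985/1269234198 : ℂ) * p 3 ^ 5 + (781164601/8938269 : ℂ) * p 2 * p 3 ^ 4 + (2767960865/47008674 : ℂ) * p 2 ^ 2 * p 3 ^ 3 - (9705054631/141026022 : ℂ) * p 2 ^ 3 * p 3 ^ 2 - (74877542851/634617099 : ℂ) * p 2 ^ 4 * p 3 - (67836678025/1269234198 : ℂ) * p 2 ^ 5 - (605012893619/17769278772 : ℂ) * p 1 * p 3 ^ 4 - (21272270357/329060718 : ℂ) * p 1 * p 2 * p 3 ^ 3 - (147791735587/1480773231 : ℂ) * p 1 * p 2 ^ 2 * p 3 ^ 2 - (341187207559/2961546462 : ℂ) * p 1 * p 2 ^ 3 * p 3 - (817312123969/17769278772 : ℂ) * p 1 * p 2 ^ 4 - (10194091265/1974364308 : ℂ) * p 1 ^ 2 * p 3 ^ 3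 - (1242666709/658121436 : ℂ) * p 1 ^ 2 * p 2 * p 3 ^ 2 + (10428476129/1974364308 : ℂ) * p 1 ^ 2 * p 2 ^ 2 * p 3 + (7217459/3596292 : ℂ) * p 1 ^ 2 * p 2 ^ 3 - (11770892465/17769278772 : ℂ) * p 0 * p 3 ^ 4 + (1526554966193/17769278772 : ℂ) * p 0 * p 2 * p 3 ^ 3 + (16520117731/219373812 : ℂ) * p 0 * p 2 ^ 2 * p 3 ^ 2 + (286248112559/2538468396 : ℂ) * p 0 * p 2 ^ 3 * p 3 + (134986695112/4442319693 : ℂ) * p 0 * p 2 ^ 4 + (16754423705/4442319693 : ℂ) * p 0 * p 1 * p 3 ^ 3 + (62640642401/1974364308 : ℂ) * p 0 * p 1 * p 2 * p 3 ^ 2 + (26846508271/8884639386 : ℂ) * p 0 * p 1 * p 2 ^ 2 * p 3 - (72977108185/17769278772 : ℂ) * p 0 * p 1 * p 2 ^ 3 + (535830653/1974364308 : ℂ) * p 0 * p 1 ^ 2 * p 3 ^ 2 - (392188339/1974364308 : ℂ) * p 0 * p 1 ^ 2 * p 2 * p 3 + (4975/1798146 : ℂ) * p 0 * p 1 ^ 2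 * p 2 ^ 2 - (1533034387/658121436 : ℂ) * p 0 ^ 2 * p 3 ^ 3 - (2879787728/164530359 : ℂ) * p 0 ^ 2 * p 2 * p 3 ^ 2 - (203485404859/5923092924 : ℂ) * p 0 ^ 2 * p 2 ^ 2 * p 3 + (50574128/493591077 : ℂ) * p 0 ^ 2 * p 2 ^ 3 - (2852134015/1974364308 : ℂ) * p 0 ^ 2 * p 1 * p 3 ^ 2 + (3055545788/1480773231 : ℂ) * p 0 ^ 2 * p 1 * p 2 * p 3 - (6321766/54843453 : ℂ) * p 0 ^ 3 * p 2 * p 3) * h2 + (-(5081942/2611593 : ℂ) * p 3 ^ 5 + (154437097/7834779 : ℂ) * p 2 * p 3 ^ 4 + (255865492/7834779 : ℂ) * p 2 ^ 2 * p 3 ^ 3 + (5081942/870531 : ℂ) * p 2 ^ 3 * p 3 ^ 2 - (179636362/7834779 : ℂ) * p 2 ^ 4 * p 3 - (139191271/7834779 : ℂ) * p 2 ^ 5 + (5952473/870531 : ℂ) * p 1 * p 2 * p 3 ^ 3 + (103263146/7834779 : ℂ) * p 1 * p 2 ^ 2 * p 3 ^ 2 + (57525668/7834779 : ℂ) * p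 1 * p 2 ^ 3 * p 3 + (1 : ℂ) * p 1 * p 2 ^ 4 - (30977877247/8884639386 : ℂ) * p 0 * p 2 * p 3 ^ 3 - (84737437714/4442319693 : ℂ) * p 0 * p 2 ^ 2 * p 3 ^ 2 - (78999846589/4442319693 : ℂ) * p 0 * p 2 ^ 3 * p 3 - (19502694997/8884639386 : ℂ) * p 0 * p 2 ^ 4 - (535830653/1974364308 : ℂ) * p 0 * p 1 * p 2 * p 3 ^ 2 - (38078527/141026022 : ℂ) * p 0 * p 1 * p 2 ^ 2 * p 3 + (4975/3596292 : ℂ) * p 0 * p 1 * p 2 ^ 3 + (2852134015/1974364308 : ℂ) * p 0 ^ 2 * p 2 * p 3 ^ 2 + (6569672533/5923092924 : ℂ) * p 0 ^ 2 * p 2 ^ 2 * p 3) * h3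
      exact pow_eq_zero_iff (by norm_num) |>.mp h13
    have hac : p 0 * p 2 = 0 := by
      have h5 : (p 0 * p 2) ^ 5 = 0 := by
        linear_combination ((11842948177/124871040 : ℂ) * p 3 + (2166136949/1915200 : ℂ) * p 2 + (73553/2520 : ℂ) * p 1 + (6947/840 : ℂ) * p 0) * h0 + ((183003194893/1873065600 : ℂ) * p 3 ^ 2 + (80476448513/208118400 : ℂ) * p 2 * p 3 + (131911320521/468266400 : ℂ) * p 2 ^ 2 - (2941/7560 : ℂ) * p 1 * p 3 - (31291/7560 : ℂ) * p 1 * p 2 + (56152027951/624355200 : ℂ) * p 0 * p 3 - (687093163/2872800 : ℂ) * p 0 * p 2 - (6563/7560 : ℂ) * p 0 * p 1 - (3265/504 : ℂ) * p 0 ^ 2) * h1 + ((84820361/220050 : ℂ) * p 3 ^ 2 + (219410131117/468266400 : ℂ) * p 2 * p 3 + (491104011551/468266400 : ℂ) * p 2 ^ 2 + (36073328861/234133200 : ℂ) * p 1 * p 3 - (767873747/2872800 : ℂ) * p 1 * p 2 - (63793/7560 : ℂ) * p 1 ^ 2 - (11237/2520 : ℂ) * p 0 * p 3 + (473401/15960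 : ℂ) * p 0 * p 2 + (1237/420 : ℂ) * p 0 * p 1 + (14927/2520 : ℂ) * p 0 ^ 2) * h2 + (-(14473/7560 : ℂ) * p 3 ^ 2 - (668315723/5745600 : ℂ) * p 2 * p 3 - (722950223/5745600 : ℂ) * p 2 ^ 2 + (5/9 : ℂ) * p 1 * p 3 - (23/4 : ℂ) * p 1 * p 2 + (1003/420 : ℂ) * p 0 * p 2) * h3 + ((31309/7560 : ℂ) * p 2 ^ 2 + (23/9 : ℂ) * p 1 * p 2 - (5/3 : ℂ) * p 0 * p 2 + (1/3 : ℂ) * p 0 ^ 2) * h4 + (-(4665740021/53516160 : ℂ) * p 3 ^ 9 - (6450863509/24645600 : ℂ) * p 2 * p 3 ^ 8 - (81040678177/104059200 : ℂ) * p 2 ^ 2 * p 3 ^ 7 - (187606137479/187306560 : ℂ) * p 2 ^ 3 * p 3 ^ 6 - (85906353073/936532800 : ℂ) * p 2 ^ 4 * p 3 ^ 5 + (184537796299/234133200 : ℂ) * p 2 ^ 5 * p 3 ^ 4 + (3006100325/4682664 : ℂ) * p 2 ^ 6 * p 3 ^ 3 - (518246059/5476800 : ℂ) * p 2 ^ 7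 * p 3 ^ 2 - (504233552393/1873065600 : ℂ) * p 2 ^ 8 * p 3 - (435191/28728 : ℂ) * p 2 ^ 9 - (53281/1512 : ℂ) * p 1 * p 3 ^ 8 + (9641801851/62435520 : ℂ) * p 1 * p 2 * p 3 ^ 7 + (987102620941/1873065600 : ℂ) * p 1 * p 2 ^ 2 * p 3 ^ 6 + (126282156109/374613120 : ℂ) * p 1 * p 2 ^ 3 * p 3 ^ 5 - (581088212783/1873065600 : ℂ) * p 1 * p 2 ^ 4 * p 3 ^ 4 - (1101795440191/1873065600 : ℂ) * p 1 * p 2 ^ 5 * p 3 ^ 3 - (272571909529/936532800 : ℂ) * p 1 * p 2 ^ 6 * p 3 ^ 2 - (524149/59850 : ℂ) * p 1 * p 2 ^ 7 * p 3 + (30673/7560 : ℂ) * p 1 * p 2 ^ 8 + (10/9 : ℂ) * p 1 ^ 2 * p 3 ^ 7 + (2363/60 : ℂ) * p 1 ^ 2 * p 2 * p 3 ^ 6 - (34321082479/374613120 : ℂ) * p 1 ^ 2 * p 2 ^ 2 * p 3 ^ 5 - (267996297607/936532800 : ℂ) * p 1 ^ 2 * p 2 ^ 3 * p 3 ^ 4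 - (315152897203/1873065600 : ℂ) * p 1 ^ 2 * p 2 ^ 4 * p 3 ^ 3 - (1230283/718200 : ℂ) * p 1 ^ 2 * p 2 ^ 5 * p 3 ^ 2 + (1301/252 : ℂ) * p 1 ^ 2 * p 2 ^ 6 * p 3 - (46/9 : ℂ) * p 1 ^ 2 * p 2 ^ 7 - (10/9 : ℂ) * p 1 ^ 3 * p 2 * p 3 ^ 5 - (35533/7560 : ℂ) * p 1 ^ 3 * p 2 ^ 2 * p 3 ^ 4 + (68/945 : ℂ) * p 1 ^ 3 * p 2 ^ 3 * p 3 ^ 3 - (10963/7560 : ℂ) * p 1 ^ 3 * p 2 ^ 4 * p 3 ^ 2 - (46/9 : ℂ) * p 1 ^ 3 * p 2 ^ 5 * p 3 - (4805/756 : ℂ) * p 0 * p 3 ^ 8 - (1495404521/20811840 : ℂ) * p 0 * p 2 * p 3 ^ 7 + (866020523/8919360 : ℂ) * p 0 * p 2 ^ 2 * p 3 ^ 6 - (2258/945 : ℂ) * p 0 * p 2 ^ 8 - (5/9 : ℂ) * p 0 * p 1 * p 3 ^ 7 - (8081/1260 : ℂ) * p 0 * p 1 * p 2 * p 3 ^ 6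 - (17629/1260 : ℂ) * p 0 * p 1 * p 2 ^ 6 * p 3 + (145/9 : ℂ) * p 0 * p 1 * p 2 ^ 7 + (10/9 : ℂ) * p 0 * p 1 ^ 2 * p 2 * p 3 ^ 5 + (260/9 : ℂ) * p 0 * p 1 ^ 2 * p 2 ^ 5 * p 3 - (3 : ℂ) * p 0 ^ 2 * p 3 ^ 7 - (29/3 : ℂ) * p 0 ^ 2 * p 2 ^ 7 + (14/3 : ℂ) * p 0 ^ 2 * p 1 * p 2 * p 3 ^ 5 - (152/3 : ℂ) * p 0 ^ 2 * p 1 * p 2 ^ 5 * p 3 - (2/3 : ℂ) * p 0 ^ 2 * p 1 * p 2 ^ 6 - (5/3 : ℂ) * p 0 ^ 2 * p 1 ^ 2 * p 2 ^ 2 * p 3 ^ 3 - (7/3 : ℂ) * p 0 ^ 2 * p 1 ^ 2 * p 2 ^ 3 * p 3 ^ 2 - (2/3 : ℂ) * p 0 ^ 2 * p 1 ^ 2 * p 2 ^ 4 * p 3 - (7/3 : ℂ) * p 0 ^ 3 * p 2 * p 3 ^ 5 + (77/3 : ℂ) * p 0 ^ 3 * p 2 ^ 5 * p 3 + (5/3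 : ℂ) * p 0 ^ 3 * p 2 ^ 6 + (10/3 : ℂ) * p 0 ^ 3 * p 1 * p 2 ^ 4 * p 3 - (4 : ℂ) * p 0 ^ 4 * p 2 ^ 4 * p 3 - (1 : ℂ) * p 0 ^ 5 * p 2 ^ 3 * p 3 + (1 : ℂ) * p 0 ^ 5 * p 2 ^ 4) * hu
      exact pow_eq_zero_iff (by norm_num) |>.mp h5
    rcases mul_eq_zero.mp hac with h | h
    · exact Or.inr ⟨h, hu⟩
    · refine Or.inl ⟨h, by linear_combination hu - h⟩
  · rintro (⟨hc, hd⟩ | ⟨ha, hu⟩)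
    · have k0 : eval p tricanF = 0 := by
        simp only [tricanF, map_add, map_sub, pderiv_mul, pderiv_pow, pderiv_X_self,
    pderiv_X_of_ne, pderiv_ofNat', pderiv_C, Pi.single_apply, pderiv_X,
    Fin.isValue, reduceIte, Fin.reduceEq, zero_mul, mul_zero, zero_add, add_zero, mul_one,
    one_mul, sub_zero, zero_sub, map_mul, map_pow, eval_X, eval_ofNat, eval_zero,
    map_natCast, Nat.cast_ofNat, eval_add, eval_sub, eval_mul, eval_pow, map_neg, map_one,
    Nat.reduceSub, pow_one, eval_C]
        rw [hc, hd]; ring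
      have k1 : eval p (pderiv (0 : Fin 4) tricanF) = 0 := by
        simp only [tricanF, map_add, map_sub, pderiv_mul, pderiv_pow, pderiv_X_self,
    pderiv_X_of_ne, pderiv_ofNat', pderiv_C, Pi.single_apply, pderiv_X,
    Fin.isValue, reduceIte, Fin.reduceEq, zero_mul, mul_zero, zero_add, add_zero, mul_one,
    one_mul, sub_zero, zero_sub, map_mul, map_pow, eval_X, eval_ofNat, eval_zero,
    map_natCast, Nat.cast_ofNat, eval_add, eval_sub, eval_mul, eval_pow, map_neg, map_one,
    Nat.reduceSub, pow_one, eval_C]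
        rw [hc, hd]; ring
      have k2 : eval p (pderiv (1 : Fin 4) tricanF) = 0 := by
        simp only [tricanF, map_add, map_sub, pderiv_mul, pderiv_pow, pderiv_X_self,
    pderiv_X_of_ne, pderiv_ofNat', pderiv_C, Pi.single_apply, pderiv_X,
    Fin.isValue, reduceIte, Fin.reduceEq, zero_mul, mul_zero, zero_add, add_zero, mul_one,
    one_mul, sub_zero, zero_sub, map_mul, map_pow, eval_X, eval_ofNat, eval_zero,
    map_natCast, Nat.cast_ofNat, eval_add, eval_sub, eval_mul, eval_pow, map_neg, map_one,
    Nat.reduceSub, pow_one, eval_C]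
        rw [hc, hd]; ring
      have k3 : eval p (pderiv (2 : Fin 4) tricanF) = 0 := by
        simp only [tricanF, map_add, map_sub, pderiv_mul, pderiv_pow, pderiv_X_self,
    pderiv_X_of_ne, pderiv_ofNat', pderiv_C, Pi.single_apply, pderiv_X,
    Fin.isValue, reduceIte, Fin.reduceEq, zero_mul, mul_zero, zero_add, add_zero, mul_one,
    one_mul, sub_zero, zero_sub, map_mul, map_pow, eval_X, eval_ofNat, eval_zero,
    map_natCast, Nat.cast_ofNat, eval_add, eval_sub, eval_mul, eval_pow, map_neg, map_one,
    Nat.reduceSub, pow_one, eval_C]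
        rw [hc, hd]; ring
      have k4 : eval p (pderiv (3 : Fin 4) tricanF) = 0 := by
        simp only [tricanF, map_add, map_sub, pderiv_mul, pderiv_pow, pderiv_X_self,
    pderiv_X_of_ne, pderiv_ofNat', pderiv_C, Pi.single_apply, pderiv_X,
    Fin.isValue, reduceIte, Fin.reduceEq, zero_mul, mul_zero, zero_add, add_zero, mul_one,
    one_mul, sub_zero, zero_sub, map_mul, map_pow, eval_X, eval_ofNat, eval_zero,
    map_natCast, Nat.cast_ofNat, eval_add, eval_sub, eval_mul, eval_pow, map_neg, map_one,
    Nat.reduceSub, pow_one, eval_C]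
        rw [hc, hd]; ring
      exact ⟨k0, fun i => match i with | 0 => k1 | 1 => k2 | 2 => k3 | 3 => k4⟩
    · have k0 : eval p tricanF = 0 := by
        simp only [tricanF, map_add, map_sub, pderiv_mul, pderiv_pow, pderiv_X_self,
    pderiv_X_of_ne, pderiv_ofNat', pderiv_C, Pi.single_apply, pderiv_X,
    Fin.isValue, reduceIte, Fin.reduceEq, zero_mul, mul_zero, zero_add, add_zero, mul_one,
    one_mul, sub_zero, zero_sub, map_mul, map_pow, eval_X, eval_ofNat, eval_zero,
    map_natCast, Nat.cast_ofNat, eval_add, eval_sub, eval_mul, eval_pow, map_neg, map_one,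
    Nat.reduceSub, pow_one, eval_C]
        linear_combination ((1 : ℂ) * p 2 * p 3 ^ 7 + (7 : ℂ) * p 2 ^ 2 * p 3 ^ 6 + (11 : ℂ) * p 2 ^ 3 * p 3 ^ 5 + (4 : ℂ) * p 2 ^ 4 * p 3 ^ 4 - (7 : ℂ) * p 2 ^ 5 * p 3 ^ 3 - (11 : ℂ) * p 2 ^ 6 * p 3 ^ 2 - (5 : ℂ) * p 2 ^ 7 * p 3 - (1 : ℂ) * p 1 * p 2 ^ 2 * p 3 ^ 5 - (7 : ℂ) * p 1 * p 2 ^ 3 * p 3 ^ 4 - (11 : ℂ) * p 1 * p 2 ^ 4 * p 3 ^ 3 - (5 : ℂ) * p 1 * p 2 ^ 5 * p 3 ^ 2 + (3 : ℂ) * p 0 * p 2 ^ 3 * p 3 ^ 4 + (9 : ℂ) * p 0 * p 2 ^ 4 * p 3 ^ 3 + (6 : ℂ) * p 0 * p 2 ^ 5 * p 3 ^ 2 + (1 : ℂ) * p 0 ^ 2 * p 2 ^ 3 * p 3 ^ 3) * ha + ((1 : ℂ) * p 3 ^ 8 + (3 : ℂ) * p 2 * p 3 ^ 7 + (3 : ℂ)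 * p 2 ^ 2 * p 3 ^ 6 - (1 : ℂ) * p 2 ^ 3 * p 3 ^ 5 - (4 : ℂ) * p 2 ^ 4 * p 3 ^ 4 - (1 : ℂ) * p 2 ^ 5 * p 3 ^ 3 + (3 : ℂ) * p 2 ^ 6 * p 3 ^ 2 + (3 : ℂ) * p 2 ^ 7 * p 3 + (1 : ℂ) * p 2 ^ 8 - (2 : ℂ) * p 1 * p 2 * p 3 ^ 6 - (4 : ℂ) * p 1 * p 2 ^ 2 * p 3 ^ 5 - (2 : ℂ) * p 1 * p 2 ^ 3 * p 3 ^ 4 + (2 : ℂ) * p 1 * p 2 ^ 4 * p 3 ^ 3 + (4 : ℂ) * p 1 * p 2 ^ 5 * p 3 ^ 2 + (2 : ℂ) * p 1 * p 2 ^ 6 * p 3 + (1 : ℂ) * p 1 ^ 2 * p 2 ^ 2 * p 3 ^ 4 + (2 : ℂ) * p 1 ^ 2 * p 2 ^ 3 * p 3 ^ 3 + (1 : ℂ) * p 1 ^ 2 * p 2 ^ 4 * p 3 ^ 2) * hu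
      have k1 : eval p (pderiv (0 : Fin 4) tricanF) = 0 := by
        simp only [tricanF, map_add, map_sub, pderiv_mul, pderiv_pow, pderiv_X_self,
    pderiv_X_of_ne, pderiv_ofNat', pderiv_C, Pi.single_apply, pderiv_X,
    Fin.isValue, reduceIte, Fin.reduceEq, zero_mul, mul_zero, zero_add, add_zero, mul_one,
    one_mul, sub_zero, zero_sub, map_mul, map_pow, eval_X, eval_ofNat, eval_zero,
    map_natCast, Nat.cast_ofNat, eval_add, eval_sub, eval_mul, eval_pow, map_neg, map_one,
    Nat.reduceSub, pow_one, eval_C]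
        linear_combination ((6 : ℂ) * p 2 ^ 3 * p 3 ^ 4 + (18 : ℂ) * p 2 ^ 4 * p 3 ^ 3 + (12 : ℂ) * p 2 ^ 5 * p 3 ^ 2 + (3 : ℂ) * p 0 * p 2 ^ 3 * p 3 ^ 3) * ha + ((1 : ℂ) * p 2 * p 3 ^ 6 + (6 : ℂ) * p 2 ^ 2 * p 3 ^ 5 + (5 : ℂ) * p 2 ^ 3 * p 3 ^ 4 - (1 : ℂ) * p 2 ^ 4 * p 3 ^ 3 - (6 : ℂ) * p 2 ^ 5 * p 3 ^ 2 - (5 : ℂ) * p 2 ^ 6 * p 3 - (1 : ℂ) * p 1 * p 2 ^ 2 * p 3 ^ 4 - (6 : ℂ) * p 1 * p 2 ^ 3 * p 3 ^ 3 - (5 : ℂ) * p 1 * p 2 ^ 4 * p 3 ^ 2) * hu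
      have k2 : eval p (pderiv (1 : Fin 4) tricanF) = 0 := by
        simp only [tricanF, map_add, map_sub, pderiv_mul, pderiv_pow, pderiv_X_self,
    pderiv_X_of_ne, pderiv_ofNat', pderiv_C, Pi.single_apply, pderiv_X,
    Fin.isValue, reduceIte, Fin.reduceEq, zero_mul, mul_zero, zero_add, add_zero, mul_one,
    one_mul, sub_zero, zero_sub, map_mul, map_pow, eval_X, eval_ofNat, eval_zero,
    map_natCast, Nat.cast_ofNat, eval_add, eval_sub, eval_mul, eval_pow, map_neg, map_one,
    Nat.reduceSub, pow_one, eval_C]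
        linear_combination (-(1 : ℂ) * p 2 ^ 2 * p 3 ^ 5 - (7 : ℂ) * p 2 ^ 3 * p 3 ^ 4 - (11 : ℂ) * p 2 ^ 4 * p 3 ^ 3 - (5 : ℂ) * p 2 ^ 5 * p 3 ^ 2) * ha + (-(2 : ℂ) * p 2 * p 3 ^ 6 - (4 : ℂ) * p 2 ^ 2 * p 3 ^ 5 - (2 : ℂ) * p 2 ^ 3 * p 3 ^ 4 + (2 : ℂ) * p 2 ^ 4 * p 3 ^ 3 + (4 : ℂ) * p 2 ^ 5 * p 3 ^ 2 + (2 : ℂ) * p 2 ^ 6 * p 3 + (2 : ℂ) * p 1 * p 2 ^ 2 * p 3 ^ 4 + (4 : ℂ) * p 1 * p 2 ^ 3 * p 3 ^ 3 + (2 : ℂ) * p 1 * p 2 ^ 4 * p 3 ^ 2) * hu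
      have k3 : eval p (pderiv (2 : Fin 4) tricanF) = 0 := by
        simp only [tricanF, map_add, map_sub, pderiv_mul, pderiv_pow, pderiv_X_self,
    pderiv_X_of_ne, pderiv_ofNat', pderiv_C, Pi.single_apply, pderiv_X,
    Fin.isValue, reduceIte, Fin.reduceEq, zero_mul, mul_zero, zero_add, add_zero, mul_one,
    one_mul, sub_zero, zero_sub, map_mul, map_pow, eval_X, eval_ofNat, eval_zero,
    map_natCast, Nat.cast_ofNat, eval_add, eval_sub, eval_mul, eval_pow, map_neg, map_one,
    Nat.reduceSub, pow_one, eval_C]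
        linear_combination ((1 : ℂ) * p 3 ^ 7 + (14 : ℂ) * p 2 * p 3 ^ 6 + (33 : ℂ) * p 2 ^ 2 * p 3 ^ 5 + (16 : ℂ) * p 2 ^ 3 * p 3 ^ 4 - (35 : ℂ) * p 2 ^ 4 * p 3 ^ 3 - (66 : ℂ) * p 2 ^ 5 * p 3 ^ 2 - (35 : ℂ) * p 2 ^ 6 * p 3 - (2 : ℂ) * p 1 * p 2 * p 3 ^ 5 - (21 : ℂ) * p 1 * p 2 ^ 2 * p 3 ^ 4 - (44 : ℂ) * p 1 * p 2 ^ 3 * p 3 ^ 3 - (25 : ℂ) * p 1 * p 2 ^ 4 * p 3 ^ 2 + (9 : ℂ) * p 0 * p 2 ^ 2 * p 3 ^ 4 + (36 : ℂ) * p 0 * p 2 ^ 3 * p 3 ^ 3 + (30 : ℂ) * p 0 * p 2 ^ 4 * p 3 ^ 2 + (3 : ℂ) * p 0 ^ 2 * p 2 ^ 2 * p 3 ^ 3) * ha + ((4 : ℂ) * p 3 ^ 7 + (8 : ℂ) * p 2 * p 3 ^ 6 - (2 : ℂ) * p 2 ^ 2 * p 3 ^ 5 - (18 : ℂ) * p 2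 ^ 3 * p 3 ^ 4 - (7 : ℂ) * p 2 ^ 4 * p 3 ^ 3 + (19 : ℂ) * p 2 ^ 5 * p 3 ^ 2 + (23 : ℂ) * p 2 ^ 6 * p 3 + (9 : ℂ) * p 2 ^ 7 - (2 : ℂ) * p 1 * p 3 ^ 6 - (10 : ℂ) * p 1 * p 2 * p 3 ^ 5 - (8 : ℂ) * p 1 * p 2 ^ 2 * p 3 ^ 4 + (8 : ℂ) * p 1 * p 2 ^ 3 * p 3 ^ 3 + (22 : ℂ) * p 1 * p 2 ^ 4 * p 3 ^ 2 + (14 : ℂ) * p 1 * p 2 ^ 5 * p 3 + (2 : ℂ) * p 1 ^ 2 * p 2 * p 3 ^ 4 + (7 : ℂ) * p 1 ^ 2 * p 2 ^ 2 * p 3 ^ 3 + (5 : ℂ) * p 1 ^ 2 * p 2 ^ 3 * p 3 ^ 2) * hu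
      have k4 : eval p (pderiv (3 : Fin 4) tricanF) = 0 := by
        simp only [tricanF, map_add, map_sub, pderiv_mul, pderiv_pow, pderiv_X_self,
    pderiv_X_of_ne, pderiv_ofNat', pderiv_C, Pi.single_apply, pderiv_X,
    Fin.isValue, reduceIte, Fin.reduceEq, zero_mul, mul_zero, zero_add, add_zero, mul_one,
    one_mul, sub_zero, zero_sub, map_mul, map_pow, eval_X, eval_ofNat, eval_zero,
    map_natCast, Nat.cast_ofNat, eval_add, eval_sub, eval_mul, eval_pow, map_neg, map_one,
    Nat.reduceSub, pow_one, eval_C]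
        linear_combination ((7 : ℂ) * p 2 * p 3 ^ 6 + (42 : ℂ) * p 2 ^ 2 * p 3 ^ 5 + (55 : ℂ) * p 2 ^ 3 * p 3 ^ 4 + (16 : ℂ) * p 2 ^ 4 * p 3 ^ 3 - (21 : ℂ) * p 2 ^ 5 * p 3 ^ 2 - (22 : ℂ) * p 2 ^ 6 * p 3 - (5 : ℂ) * p 2 ^ 7 - (5 : ℂ) * p 1 * p 2 ^ 2 * p 3 ^ 4 - (28 : ℂ) * p 1 * p 2 ^ 3 * p 3 ^ 3 - (33 : ℂ) * p 1 * p 2 ^ 4 * p 3 ^ 2 - (10 : ℂ) * p 1 * p 2 ^ 5 * p 3 + (12 : ℂ) * p 0 * p 2 ^ 3 * p 3 ^ 3 + (27 : ℂ) * p 0 * p 2 ^ 4 * p 3 ^ 2 + (12 : ℂ) * p 0 * p 2 ^ 5 * p 3 + (3 : ℂ) * p 0 ^ 2 * p 2 ^ 3 * p 3 ^ 2) * ha + ((9 : ℂ) * p 3 ^ 7 + (23 : ℂ) * p 2 * p 3 ^ 6 + (19 : ℂ) * p 2 ^ 2 * p 3 ^ 5 - (7 : ℂ) * p 2 ^ 3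 * p 3 ^ 4 - (18 : ℂ) * p 2 ^ 4 * p 3 ^ 3 - (2 : ℂ) * p 2 ^ 5 * p 3 ^ 2 + (8 : ℂ) * p 2 ^ 6 * p 3 + (4 : ℂ) * p 2 ^ 7 - (14 : ℂ) * p 1 * p 2 * p 3 ^ 5 - (22 : ℂ) * p 1 * p 2 ^ 2 * p 3 ^ 4 - (8 : ℂ) * p 1 * p 2 ^ 3 * p 3 ^ 3 + (8 : ℂ) * p 1 * p 2 ^ 4 * p 3 ^ 2 + (10 : ℂ) * p 1 * p 2 ^ 5 * p 3 + (2 : ℂ) * p 1 * p 2 ^ 6 + (5 : ℂ) * p 1 ^ 2 * p 2 ^ 2 * p 3 ^ 3 + (7 : ℂ) * p 1 ^ 2 * p 2 ^ 3 * p 3 ^ 2 + (2 : ℂ) * p 1 ^ 2 * p 2 ^ 4 * p 3) * hu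
      exact ⟨k0, fun i => match i with | 0 => k1 | 1 => k2 | 2 => k3 | 3 => k4⟩
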